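/- Let 0<q<1 and define e_q((1-q²)x/2) = Σ_{n=0}^∞ ((1-q²)^n x^n)/((q;q)_n 2^n) = 1/(((1-q²)x/2;q)_∞). Then for every real s ≠ 0, lim_{m→∞} |e_q(i (1-q²) q^{-m} s / 2)| = 0. -/

import Mathlib

/-- The infinite q-Pochhammer symbol `(x;q)_∞ = ∏_{n≥0} (1 - x q^n)`. -/
noncomputable def qp (q x : ℂ) : ℂ := ∏' n : ℕ, (1 - x * q ^ n)

/-- The q-exponential `e_q((1-q²)x/2) = 1/(((1-q²)x/2;q)_∞)` (meromorphic continuation). -/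
noncomputable def eq' (q : ℝ) (x : ℂ) : ℂ := (qp q ((1 - (q : ℂ) ^ 2) / 2 * x))⁻¹

open Complex Filter

section Aux
variable {q : ℝ}

lemma aux_summable_log (hq0 : 0 < q) (hq1 : q < 1) (x : ℂ) :
    Summable fun n : ℕ => Complex.log (1 - x * (q : ℂ) ^ n) := by
  have hgeo : Summable fun n : ℕ => (3 / 2) * ‖x‖ * q ^ n :=
    (summable_geometric_of_lt_one hq0.le hq1).mul_left _
  apply Summable.of_norm_bounded_eventually_nat hgeo
  have htend : Tendsto (fun n : ℕ => ‖x‖ * q ^ n) atTop (nhds 0) := by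
    simpa using (tendsto_pow_atTop_nhds_zero_of_lt_one hq0.le hq1).const_mul (‖x‖)
  have hev : ∀ᶠ n : ℕ in atTop, ‖x‖ * q ^ n ≤ 1 / 2 :=
    htend.eventually_le_const (by norm_num)
  filter_upwards [hev] with n hn
  have hnorm : ‖-(x * (q : ℂ) ^ n)‖ ≤ 1 / 2 := by
    rw [norm_neg]
    have : ‖x * (q : ℂ) ^ n‖ = ‖x‖ * q ^ n := by
      simp [norm_pow, Complex.norm_real, abs_of_pos hq0]
    rw [this]; exact hn
  have hb := Complex.norm_log_one_add_half_le_self hnorm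
  have : (1 : ℂ) - x * (q : ℂ) ^ n = 1 + -(x * (q : ℂ) ^ n) := by ring
  rw [this]
  refine hb.trans ?_
  rw [norm_neg]
  have : ‖x * (q : ℂ) ^ n‖ = ‖x‖ * q ^ n := by
    simp [norm_pow, Complex.norm_real, abs_of_pos hq0]
  rw [this]; ring_nf; rfl

lemma aux_ne (u : ℝ) : (1 : ℂ) - I * (u : ℂ) ≠ 0 := by
  intro h
  have := congrArg Complex.re h
  simp at this

lemma aux_abs_one (u : ℝ) : 1 ≤ ‖(1 - I * (u : ℂ))‖ := by
  have h := Complex.abs_re_le_norm (1 - I * (u : ℂ))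
  simpa using h

lemma aux_abs_u (u : ℝ) : |u| ≤ ‖(1 - I * (u : ℂ))‖ := by
  have h := Complex.abs_im_le_norm (1 - I * (u : ℂ))
  simp at h
  simpa [abs_neg] using h

lemma aux_factor_eq {q : ℝ} (u : ℝ) (n : ℕ) :
    (1 : ℂ) - (I * (u : ℂ)) * (q : ℂ) ^ n = 1 - I * ((u * q ^ n : ℝ) : ℂ) := by
  push_cast; ring

lemma aux_mult {q : ℝ} (hq0 : 0 < q) (hq1 : q < 1) (u : ℝ) :
    Multipliable fun n : ℕ => (1 : ℂ) - (I * (u : ℂ)) * (q : ℂ) ^ n := by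
  exact Complex.multipliable_of_summable_log (aux_summable_log hq0 hq1 _)

lemma aux_qp_ne {q : ℝ} (hq0 : 0 < q) (hq1 : q < 1) (u : ℝ) :
    qp q (I * (u : ℂ)) ≠ 0 := by
  have h := Complex.cexp_tsum_eq_tprod
    (f := fun (n : ℕ) => (1 : ℂ) - (I * (u : ℂ)) * (q : ℂ) ^ n)
    (fun n => by
      show (1 : ℂ) - (I * (u : ℂ)) * (q : ℂ) ^ n ≠ 0
      rw [aux_factor_eq]; exact aux_ne _)
    (aux_summable_log hq0 hq1 _)
  have h2 := h
  rw [qp, ← h2]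
  exact Complex.exp_ne_zero _

set_option maxHeartbeats 1000000 in
lemma aux_shift {q : ℝ} (hq0 : 0 < q) (hq1 : q < 1) (u : ℝ) :
    qp q (I * (u : ℂ)) = (1 - I * (u : ℂ)) * qp q (I * ((q * u : ℝ) : ℂ)) := by
  unfold qp
  have hm : Multipliable fun n : ℕ => (1 : ℂ) - (I * (u : ℂ)) * (q : ℂ) ^ (n + 1) := by
    have h := aux_mult hq0 hq1 (q * u)
    apply h.congr
    intro n
    push_cast
    ring
  rw [tprod_eq_zero_mul' hm]
  congr 1
  · simp
  · apply tprod_congr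
    intro n
    push_cast
    ring

end Aux

theorem stmt5 (q : ℝ) (hq0 : 0 < q) (hq1 : q < 1) (s : ℝ) (hs : s ≠ 0) :
    Filter.Tendsto
      (fun m : ℕ => ‖eq' q (Complex.I * (q : ℂ) ^ (-(m : ℤ)) * (s : ℂ))‖)
      Filter.atTop (nhds 0) := by
  have hqne : q ≠ 0 := ne_of_gt hq0
  set r : ℝ := (1 - q ^ 2) / 2 * s with hr_def
  have hr : r ≠ 0 := by
    apply mul_ne_zero _ hs
    have : q ^ 2 < 1 := by nlinarith
    intro h; rw [div_eq_zero_iff] at h; rcases h with h | h <;> nlinarith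
  set t : ℕ → ℝ := fun m => r * q ^ (-(m : ℤ)) with ht_def
  set F : ℕ → ℝ := fun m => ‖qp q (I * ((t m : ℝ) : ℂ))‖ with hF_def
  -- the function in the statement equals fun m => (F m)⁻¹
  have harg : ∀ m : ℕ,
      (1 - (q : ℂ) ^ 2) / 2 * (Complex.I * (q : ℂ) ^ (-(m : ℤ)) * (s : ℂ))
        = I * ((t m : ℝ) : ℂ) := by
    intro m
    rw [ht_def, hr_def]
    push_cast
    ring
  have hfun : ∀ m : ℕ,
      ‖eq' q (Complex.I * (q : ℂ) ^ (-(m : ℤ)) * (s : ℂ))‖ = (F m)⁻¹ := by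
    intro m
    rw [eq', harg m, norm_inv]
  simp only [hfun]
  -- recursion
  have hrec : ∀ m : ℕ, F (m + 1) = ‖(1 - I * ((t (m + 1) : ℝ) : ℂ))‖ * F m := by
    intro m
    have hq_t : q * t (m + 1) = t m := by
      rw [ht_def]
      simp only
      rw [← mul_assoc, mul_comm q r, mul_assoc]
      congr 1
      rw [← zpow_one_add₀ hqne]
      congr 1
      push_cast
      ring
    rw [hF_def]
    simp only
    rw [aux_shift hq0 hq1 (t (m + 1)), norm_mul, hq_t]
  have hF0pos : 0 < F 0 := by
    rw [hF_def]
    exact norm_pos_iff.mpr (aux_qp_ne hq0 hq1 _)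
  have hmono : ∀ m : ℕ, F 0 ≤ F m := by
    intro m
    induction m with
    | zero => exact le_refl _
    | succ k ih =>
      rw [hrec k]
      calc F 0 ≤ F k := ih
        _ = 1 * F k := (one_mul _).symm
        _ ≤ _ := by
          apply mul_le_mul_of_nonneg_right (aux_abs_one _)
          exact le_trans hF0pos.le ih
  have hbound : ∀ m : ℕ, |r| * (1 / q) ^ (m + 1) * F 0 ≤ F (m + 1) := by
    intro m
    rw [hrec m]
    have h1 : |t (m + 1)| ≤ ‖(1 - I * ((t (m + 1) : ℝ) : ℂ))‖ := aux_abs_u _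
    have h2 : |t (m + 1)| = |r| * (1 / q) ^ (m + 1) := by
      rw [ht_def]
      simp only
      rw [abs_mul]
      congr 1
      rw [abs_of_pos (zpow_pos hq0 _)]
      rw [zpow_neg, zpow_natCast, one_div, inv_pow]
    calc |r| * (1 / q) ^ (m + 1) * F 0 = |t (m + 1)| * F 0 := by rw [h2]
      _ ≤ ‖(1 - I * ((t (m + 1) : ℝ) : ℂ))‖ * F m :=
          mul_le_mul h1 (hmono m) hF0pos.le (norm_nonneg _)
  -- F tends to atTop
  have hFtop : Tendsto F atTop atTop := by
    have hgeo : Tendsto (fun m : ℕ => (1 / q) ^ m) atTop atTop :=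
      tendsto_pow_atTop_atTop_of_one_lt (by rw [lt_div_iff₀ hq0]; linarith)
    have hg : Tendsto (fun m : ℕ => |r| * (1 / q) ^ m * F 0) atTop atTop := by
      have h := (hgeo.const_mul_atTop (by positivity : (0:ℝ) < |r|)).atTop_mul_const hF0pos
      exact h
    apply tendsto_atTop_mono' atTop ?_ hg
    filter_upwards [eventually_ge_atTop 1] with m hm
    obtain ⟨k, rfl⟩ := Nat.exists_eq_add_of_le hm
    simpa [add_comm] using hbound k
  exact hFtop.inv_tendsto_atTop
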